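/- For every n ≥ 0 and every t ∈ ℝ³_H, the Cesàro (C,2) kernel of the hexagonal Fourier series is nonnegative: Σ_{k=0}^n (n−k+1)·D_k(t) is a nonnegative real number. Consequently the (C,2) means S_n^{(2)}f(t) := (1/(C(n+2,2)·|Ω|)) ∫_Ω f(t−s)·[Σ_{k=0}^n (n−k+1)·D_k(s)] ds define positive linear operators on H-periodic functions. -/
import Mathlib

noncomputable section

open MeasureTheory Filter

def Hex : Set (ℝ × ℝ) :=
  {t | -1 ≤ t.1 ∧ t.1 < 1 ∧ -1 ≤ t.2 ∧ t.2 < 1 ∧ -1 ≤ t.1 + t.2 ∧ t.1 + t.2 < 1}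

def hexVol : ℝ := (MeasureTheory.volume Hex).toReal

def phiH (j : ℤ × ℤ) (t : ℝ × ℝ) : ℂ :=
  Complex.exp (2 * Real.pi * Complex.I *
    ((j.1 : ℂ) * t.1 + (j.2 : ℂ) * t.2 + ((j.1 : ℂ) + (j.2 : ℂ)) * ((t.1 : ℂ) + (t.2 : ℂ))) / 3)

def HPeriodic (f : ℝ × ℝ → ℂ) : Prop :=
  ∀ j : ℤ × ℤ, (3 : ℤ) ∣ (j.1 - j.2) → (3 : ℤ) ∣ (j.2 - (-(j.1 + j.2))) →
    ∀ t : ℝ × ℝ, f (t.1 + (j.1 : ℝ), t.2 + (j.2 : ℝ)) = f t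

def HexIdx (n : ℕ) : Finset (ℤ × ℤ) :=
  (Finset.Icc (-(n:ℤ), -(n:ℤ)) ((n:ℤ), (n:ℤ))).filter
    (fun j => -(n:ℤ) ≤ -(j.1 + j.2) ∧ -(j.1 + j.2) ≤ (n:ℤ))

def Dker (n : ℕ) (t : ℝ × ℝ) : ℂ := ∑ j ∈ HexIdx n, phiH j t

def Ces2Ker (n : ℕ) (t : ℝ × ℝ) : ℂ :=
  ∑ k ∈ Finset.range (n + 1), ((n - k + 1 : ℕ) : ℂ) * Dker k t

def Ces2Mean (f : ℝ × ℝ → ℂ) (n : ℕ) (t : ℝ × ℝ) : ℂ :=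
  ((1 / (((n + 2).choose 2 : ℝ) * hexVol) : ℝ) : ℂ) *
    ∫ s in Hex, f (t.1 - s.1, t.2 - s.2) * Ces2Ker n s

/- ### Auxiliary machinery -/

/-- hex norm of `j ∈ ℤ³_H` -/
def hnorm (j : ℤ × ℤ) : ℕ := max (max j.1.natAbs j.2.natAbs) (j.1 + j.2).natAbs

/-- discrete triangle `{p : p₁+p₂ ≤ n}` -/
def Tri (n : ℕ) : Finset (ℕ × ℕ) :=
  (Finset.range (n+1) ×ˢ Finset.range (n+1)).filter (fun p => p.1 + p.2 ≤ n)

lemma mem_HexIdx {n : ℕ} {j : ℤ × ℤ} : j ∈ HexIdx n ↔ hnorm j ≤ n := by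
  simp only [HexIdx, hnorm, Finset.mem_filter, Finset.mem_Icc, Prod.le_def]
  omega

lemma mem_Tri {n : ℕ} {p : ℕ × ℕ} : p ∈ Tri n ↔ p.1 + p.2 ≤ n := by
  simp only [Tri, Finset.mem_filter, Finset.mem_product, Finset.mem_range]
  omega

def Sidx (n : ℕ) : Finset ((_ : ℕ) × (_ : ℕ) × ℤ × ℤ) :=
  (Finset.range (n+1)).sigma (fun k => (Finset.range (n - k + 1)).sigma (fun _ => HexIdx k))

def fwdMap (x : (_ : ℕ) × (_ : ℕ) × ℤ × ℤ) : (ℕ × ℕ) × (ℕ × ℕ) :=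
  ((x.1 - hnorm x.2.2 + x.2.2.1.toNat, x.2.1 + x.2.2.2.toNat),
   (x.1 - hnorm x.2.2 + (-x.2.2.1).toNat, x.2.1 + (-x.2.2.2).toNat))

def bwdMap (y : (ℕ × ℕ) × (ℕ × ℕ)) : (_ : ℕ) × (_ : ℕ) × ℤ × ℤ :=
  ⟨min y.1.1 y.2.1 + hnorm ((y.1.1 : ℤ) - y.2.1, (y.1.2 : ℤ) - y.2.2),
   min y.1.2 y.2.2, ((y.1.1 : ℤ) - y.2.1, (y.1.2 : ℤ) - y.2.2)⟩

lemma ces2_eq_sigma (n : ℕ) (t : ℝ × ℝ) :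
    Ces2Ker n t = ∑ x ∈ Sidx n, phiH x.2.2 t := by
  unfold Ces2Ker Dker Sidx
  rw [Finset.sum_sigma]
  refine Finset.sum_congr rfl fun k _ => ?_
  rw [Finset.sum_sigma]
  dsimp only
  rw [Finset.sum_const, Finset.card_range, nsmul_eq_mul]

lemma ces2_eq_pairs (n : ℕ) (t : ℝ × ℝ) :
    Ces2Ker n t =
      ∑ y ∈ Tri n ×ˢ Tri n, phiH ((y.1.1 : ℤ) - y.2.1, (y.1.2 : ℤ) - y.2.2) t := by
  rw [ces2_eq_sigma]
  refine Finset.sum_nbij' fwdMap bwdMap ?_ ?_ ?_ ?_ ?_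
  · rintro ⟨k, m, j1, j2⟩ hx
    simp only [Sidx, Finset.mem_sigma, Finset.mem_range, mem_HexIdx] at hx
    simp only [fwdMap, hnorm, Finset.mem_product, mem_Tri] at hx ⊢
    omega
  · rintro ⟨⟨p1, p2⟩, q1, q2⟩ hy
    simp only [Finset.mem_product, mem_Tri] at hy
    simp only [bwdMap, Sidx, Finset.mem_sigma, Finset.mem_range, mem_HexIdx, hnorm] at hy ⊢
    omega
  · rintro ⟨k, m, j1, j2⟩ hx
    simp only [Sidx, Finset.mem_sigma, Finset.mem_range, mem_HexIdx, hnorm] at hx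
    simp only [fwdMap, bwdMap, hnorm, Sigma.mk.inj_iff, heq_eq_eq, Prod.mk.injEq]
    refine ⟨by omega, by omega, by omega, by omega⟩
  · rintro ⟨⟨p1, p2⟩, q1, q2⟩ hy
    simp only [Finset.mem_product, mem_Tri] at hy
    simp only [fwdMap, bwdMap, hnorm, Prod.mk.injEq]
    refine ⟨⟨by omega, by omega⟩, by omega, by omega⟩
  · rintro ⟨k, m, j1, j2⟩ hx
    simp only [Sidx, Finset.mem_sigma, Finset.mem_range, mem_HexIdx, hnorm] at hx
    have h1 : (((fwdMap ⟨k, m, (j1, j2)⟩).1.1 : ℤ) - (fwdMap ⟨k, m, (j1, j2)⟩).2.1) = j1 := by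
      simp only [fwdMap, hnorm]; omega
    have h2 : (((fwdMap ⟨k, m, (j1, j2)⟩).1.2 : ℤ) - (fwdMap ⟨k, m, (j1, j2)⟩).2.2) = j2 := by
      simp only [fwdMap, hnorm]; omega
    rw [h1, h2]

lemma phiH_sub (p q : ℤ × ℤ) (t : ℝ × ℝ) :
    phiH (p.1 - q.1, p.2 - q.2) t = phiH p t * (starRingEnd ℂ) (phiH q t) := by
  unfold phiH
  rw [← Complex.exp_conj, ← Complex.exp_add]
  congr 1
  simp only [map_div₀, map_mul, map_add, map_ofNat, Complex.conj_I, Complex.conj_ofReal,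
    map_intCast]
  push_cast
  ring

lemma ces2_eq_normSq (n : ℕ) (t : ℝ × ℝ) :
    Ces2Ker n t =
      ((Complex.normSq (∑ p ∈ Tri n, phiH ((p.1 : ℤ), (p.2 : ℤ)) t) : ℝ) : ℂ) := by
  rw [ces2_eq_pairs, ← Complex.mul_conj, map_sum, Finset.sum_mul_sum, ← Finset.sum_product']
  refine Finset.sum_congr rfl fun y _ => ?_
  exact phiH_sub ((y.1.1 : ℤ), (y.1.2 : ℤ)) ((y.2.1 : ℤ), (y.2.2 : ℤ)) t

/-- the Cesàro `(C,2)` kernel of the hexagonal Fourier series is a nonnegative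
real number at every point; consequently the `(C,2)` means are positive operators on
`H`-periodic functions: they take nonnegative (real-valued) functions to nonnegative
(real-valued) functions. -/
theorem stmt6 :
    (∀ (n : ℕ) (t : ℝ × ℝ), (Ces2Ker n t).im = 0 ∧ 0 ≤ (Ces2Ker n t).re) ∧
    (∀ f : ℝ × ℝ → ℂ, HPeriodic f → (∀ s, (f s).im = 0 ∧ 0 ≤ (f s).re) →
      ∀ (n : ℕ) (t : ℝ × ℝ), (Ces2Mean f n t).im = 0 ∧ 0 ≤ (Ces2Mean f n t).re) := by
  constructor
  · intro n t
    rw [ces2_eq_normSq]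
    exact ⟨Complex.ofReal_im _, by rw [Complex.ofReal_re]; exact Complex.normSq_nonneg _⟩
  · intro f _ hf n t
    have hc : (0:ℝ) ≤ 1 / (((n + 2).choose 2 : ℝ) * hexVol) :=
      one_div_nonneg.mpr (mul_nonneg (Nat.cast_nonneg _) ENNReal.toReal_nonneg)
    have hfs : ∀ s, f s = (((f s).re : ℝ) : ℂ) := fun s =>
      Complex.ext (by simp) (by simp [(hf s).1])
    have key : ∀ s : ℝ × ℝ, f (t.1 - s.1, t.2 - s.2) * Ces2Ker n s =
        (((f (t.1 - s.1, t.2 - s.2)).re *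
          Complex.normSq (∑ p ∈ Tri n, phiH ((p.1 : ℤ), (p.2 : ℤ)) s) : ℝ) : ℂ) := by
      intro s
      rw [ces2_eq_normSq n s, Complex.ofReal_mul]
      congr 1
      exact hfs _
    have hint : (∫ s in Hex, f (t.1 - s.1, t.2 - s.2) * Ces2Ker n s) =
        ((∫ s in Hex, (f (t.1 - s.1, t.2 - s.2)).re *
            Complex.normSq (∑ p ∈ Tri n, phiH ((p.1 : ℤ), (p.2 : ℤ)) s) : ℝ) : ℂ) := by
      simp_rw [key]
      exact integral_ofReal
    have hr : (0:ℝ) ≤ ∫ s in Hex, (f (t.1 - s.1, t.2 - s.2)).re *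
        Complex.normSq (∑ p ∈ Tri n, phiH ((p.1 : ℤ), (p.2 : ℤ)) s) :=
      integral_nonneg fun s => mul_nonneg (hf _).2 (Complex.normSq_nonneg _)
    unfold Ces2Mean
    rw [hint, ← Complex.ofReal_mul]
    exact ⟨Complex.ofReal_im _, by rw [Complex.ofReal_re]; exact mul_nonneg hc hr⟩
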